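/- Let S¹ = { z ∈ ℂ : |z| = 1 } and let σ : S¹ → S¹ be the reflection σ(z) = −conj(z). For every continuous map f : [−1, 1] → [−1, 1] with f(−1) = −1 and f(1) = 1, there exists a continuous map F : S¹ → S¹ such that F(σ(z)) = σ(F(z)) for all z ∈ S¹ and Im(F(z)) = f(Im(z)) for all z ∈ S¹; that is, every continuous self-map of [−1,1] fixing the endpoints lifts to a σ-equivariant self-map of the circle inducing f on the quotient. -/

import Mathlib

/-- The unit circle `S¹ = { z ∈ ℂ : |z| = 1 }`, with the subspace topology. -/
def UnitCircle : Type := { z : ℂ // ‖z‖ = 1 }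

noncomputable instance : TopologicalSpace UnitCircle :=
  instTopologicalSpaceSubtype

/-- The reflection of `S¹` at the imaginary axis, `σ(z) = -conj(z)`. -/
noncomputable def circleReflection (z : UnitCircle) : UnitCircle :=
  ⟨-(starRingEnd ℂ) z.1, by rw [norm_neg, Complex.norm_conj]; exact z.2⟩

/-- The map `S¹ → [-1, 1]` taking imaginary parts. -/
noncomputable def imMap (z : UnitCircle) : Set.Icc (-1 : ℝ) 1 :=
  ⟨z.1.im, by
    constructor
    · have h := Complex.abs_im_le_norm z.1
      rw [z.2] at h
      linarith [neg_abs_le z.1.im, abs_nonneg z.1.im]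
    · have h := Complex.abs_im_le_norm z.1
      rw [z.2] at h
      linarith [le_abs_self z.1.im]⟩

/-- Every continuous map `f : [-1, 1] → [-1, 1]` with `f(-1) = -1` and
`f(1) = 1` lifts to a continuous `σ`-equivariant self-map `F` of the circle `S¹` inducing
`f` on the quotient, i.e. `F(σ(z)) = σ(F(z))` and `Im(F(z)) = f(Im(z))` for all `z`. -/
theorem equivariant_lift_of_interval_map
    (f : Set.Icc (-1 : ℝ) 1 → Set.Icc (-1 : ℝ) 1) (hf : Continuous f)
    (hneg : f ⟨-1, by norm_num⟩ = ⟨-1, by norm_num⟩)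
    (hpos : f ⟨1, by norm_num⟩ = ⟨1, by norm_num⟩) :
    ∃ F : UnitCircle → UnitCircle,
      Continuous F ∧
      (∀ z : UnitCircle, F (circleReflection z) = circleReflection (F z)) ∧
      (∀ z : UnitCircle, imMap (F z) = f (imMap z)) := by
  classical
  -- imaginary part of image
  set t : UnitCircle → ℝ := fun z => (f (imMap z) : ℝ) with ht_def
  have him_cont : Continuous (imMap) :=
    Continuous.subtype_mk (Complex.continuous_im.comp continuous_subtype_val) _
  have ht_cont : Continuous t :=
    continuous_subtype_val.comp (hf.comp him_cont)
  have ht_mem : ∀ z, t z ∈ Set.Icc (-1 : ℝ) 1 := fun z => (f (imMap z)).2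
  set s : UnitCircle → ℝ := fun z => Real.sqrt (1 - (t z) ^ 2) with hs_def
  have hs_cont : Continuous s :=
    Real.continuous_sqrt.comp (continuous_const.sub (ht_cont.pow 2))
  have hs_nonneg : ∀ z, 0 ≤ s z := fun z => Real.sqrt_nonneg _
  have hs_sq : ∀ z, (s z) ^ 2 = 1 - (t z) ^ 2 := by
    intro z
    apply Real.sq_sqrt
    nlinarith [(ht_mem z).1, (ht_mem z).2]
  set c : UnitCircle → ℝ := fun z => (if 0 ≤ z.1.re then (1 : ℝ) else -1) * s z with hc_def
  have hc_sq : ∀ z, (c z) ^ 2 = 1 - (t z) ^ 2 := by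
    intro z
    simp only [hc_def]
    split <;> rw [mul_pow] <;> simpa using hs_sq z
  -- if re = 0 then s = 0
  have hkey : ∀ z : UnitCircle, z.1.re = 0 → s z = 0 := by
    intro z hz
    have hsq : z.1.im ^ 2 = 1 := by
      have h1 : ‖z.1‖ ^ 2 = Complex.normSq z.1 := Complex.sq_norm z.1
      rw [z.2, Complex.normSq_apply] at h1
      nlinarith
    have him : z.1.im = 1 ∨ z.1.im = -1 := by
      have hmz : (z.1.im - 1) * (z.1.im + 1) = 0 := by nlinarith
      rcases mul_eq_zero.mp hmz with h | h
      · left; linarith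
      · right; linarith
    have : t z = 1 ∨ t z = -1 := by
      rcases him with h | h
      · left
        have : imMap z = ⟨1, by norm_num⟩ := Subtype.ext h
        simp only [ht_def, this, hpos]
      · right
        have : imMap z = ⟨-1, by norm_num⟩ := Subtype.ext h
        simp only [ht_def, this, hneg]
    rcases this with h | h <;> simp [hs_def, h]
  have hc_zero : ∀ z : UnitCircle, z.1.re = 0 → c z = 0 := by
    intro z hz
    simp [hc_def, hkey z hz]
  -- continuity of c
  have hre_cont : Continuous (fun z : UnitCircle => z.1.re) :=
    Complex.continuous_re.comp continuous_subtype_val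
  have hc_cont : Continuous c := by
    rw [continuous_iff_continuousAt]
    intro z
    rcases lt_trichotomy z.1.re 0 with h | h | h
    · have hmem : {w : UnitCircle | w.1.re < 0} ∈ nhds z :=
        (isOpen_lt hre_cont continuous_const).mem_nhds h
      have heq : (fun w => -s w) =ᶠ[nhds z] c := by
        filter_upwards [hmem] with w hw
        show -s w = (if 0 ≤ w.1.re then (1 : ℝ) else -1) * s w
        rw [if_neg (not_le.mpr hw)]; ring
      exact (hs_cont.neg.continuousAt).congr heq
    · have hten : Filter.Tendsto c (nhds z) (nhds 0) := by
        have hb : ∀ w, ‖c w‖ ≤ s w := by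
          intro w
          have : |c w| = s w := by
            simp only [hc_def, abs_mul]
            split <;> simp [abs_of_nonneg (hs_nonneg w)]
          simpa [Real.norm_eq_abs] using this.le
        have hts : Filter.Tendsto s (nhds z) (nhds 0) := by
          have := hs_cont.continuousAt (x := z)
          rw [ContinuousAt] at this
          rwa [hkey z h] at this
        exact squeeze_zero_norm hb hts
      have : c z = 0 := hc_zero z h
      rw [ContinuousAt, this]
      exact hten
    · have hmem : {w : UnitCircle | 0 < w.1.re} ∈ nhds z :=
        (isOpen_lt continuous_const hre_cont).mem_nhds h
      have heq : (fun w => s w) =ᶠ[nhds z] c := by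
        filter_upwards [hmem] with w hw
        show s w = (if 0 ≤ w.1.re then (1 : ℝ) else -1) * s w
        rw [if_pos hw.le]; ring
      exact (hs_cont.continuousAt).congr heq
  -- the lift
  have habs : ∀ z : UnitCircle, ‖(c z : ℂ) + (t z : ℂ) * Complex.I‖ = 1 := by
    intro z
    rw [Complex.norm_def, Complex.normSq_add_mul_I]
    rw [hc_sq z]
    simp
  refine ⟨fun z => ⟨(c z : ℂ) + (t z : ℂ) * Complex.I, habs z⟩, ?_, ?_, ?_⟩
  · apply Continuous.subtype_mk
    exact (Complex.continuous_ofReal.comp hc_cont).add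
      ((Complex.continuous_ofReal.comp ht_cont).mul continuous_const)
  · intro z
    have himeq : imMap (circleReflection z) = imMap z := by
      apply Subtype.ext
      simp [imMap, circleReflection]
    have htt : t (circleReflection z) = t z := by simp [ht_def, himeq]
    have hss : s (circleReflection z) = s z := by simp [hs_def, htt]
    have hcc : c (circleReflection z) = -(c z) := by
      simp only [hc_def, hss]
      have hre : (circleReflection z).1.re = -z.1.re := by
        simp [circleReflection]
      rw [hre]
      rcases lt_trichotomy z.1.re 0 with h | h | h
      · rw [if_neg (not_le.mpr h), if_pos (by linarith)]
        ring
      · rw [hkey z h]; ring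
      · rw [if_pos h.le, if_neg (by simpa using h)]
        ring
    apply Subtype.ext
    show (c (circleReflection z) : ℂ) + (t (circleReflection z) : ℂ) * Complex.I =
      -(starRingEnd ℂ) ((c z : ℂ) + (t z : ℂ) * Complex.I)
    rw [hcc, htt]
    apply Complex.ext <;> simp
  · intro z
    apply Subtype.ext
    show ((c z : ℂ) + (t z : ℂ) * Complex.I).im = (f (imMap z) : ℝ)
    simp [ht_def]
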